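/- For n ≥ 3, the uniform vector (1/n, …, 1/n) is the unique minimizer of the function x ↦ H(1−x) − H(x) over the standard simplex Δ^{n-1}: for every x ∈ Δ^{n-1} with x ≠ (1/n,…,1/n), H(1−(1/n,…,1/n)) − H((1/n,…,1/n)) < H(1−x) − H(x). -/

import Mathlib

open Finset

/-- `φ(t) = t log t - (1-t) log (1-t)`; the objective is `∑ φ(xᵢ)`. -/
noncomputable def phiF (t : ℝ) : ℝ := t * Real.log t - (1 - t) * Real.log (1 - t)

lemma continuous_phiF : Continuous phiF := by
  unfold phiF
  exact Real.continuous_mul_log.sub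
    (Real.continuous_mul_log.comp (continuous_const.sub continuous_id))

lemma hasDerivAt_one_sub_mul_log {t : ℝ} (h1 : t ≠ 1) :
    HasDerivAt (fun t : ℝ => (1 - t) * Real.log (1 - t)) (-(Real.log (1 - t) + 1)) t := by
  have h1' : (1 : ℝ) - t ≠ 0 := sub_ne_zero.mpr (Ne.symm h1)
  have hinner : HasDerivAt (fun t : ℝ => 1 - t) (-1) t := by
    simpa using (hasDerivAt_id' t).const_sub (1:ℝ)
  have := (Real.hasDerivAt_mul_log h1').comp t hinner
  simpa [mul_comm, Function.comp_def] using this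

lemma hasDerivAt_phiF {t : ℝ} (h0 : t ≠ 0) (h1 : t ≠ 1) :
    HasDerivAt phiF (Real.log t + Real.log (1 - t) + 2) t := by
  have d1 := Real.hasDerivAt_mul_log h0
  have d2 := hasDerivAt_one_sub_mul_log h1
  have := d1.sub d2
  refine this.congr_deriv ?_
  ring

/-- tangent line to `t log t` at `b`. -/
lemma mul_log_tangent {t b : ℝ} (ht : 0 ≤ t) (hb : 0 < b) :
    t * Real.log b + t - b ≤ t * Real.log t := by
  rcases eq_or_lt_of_le ht with h | h
  · simp [← h, hb.le]
  · have hlog := Real.log_le_sub_one_of_pos (show (0:ℝ) < b / t from div_pos hb h)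
    rw [Real.log_div hb.ne' h.ne'] at hlog
    have h2 := mul_le_mul_of_nonneg_left hlog h.le
    have h3 : t * (b / t - 1) = b - t := by field_simp
    nlinarith
/-- chord bound for the concave function `t ↦ -(1-t) log (1-t)` on `[0,a]`. -/
lemma chord_bound {a t : ℝ} (ha0 : 0 < a) (ha1 : a ≤ 1) (ht0 : 0 ≤ t) (hta : t ≤ a) :
    (t / a) * (-((1 - a) * Real.log (1 - a))) ≤ -((1 - t) * Real.log (1 - t)) := by
  have hcc := Real.concaveOn_negMulLog
  have hmem1 : (1:ℝ) ∈ Set.Ici (0:ℝ) := by norm_num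
  have hmem2 : (1:ℝ) - a ∈ Set.Ici (0:ℝ) := by simp; linarith
  have hl0 : 0 ≤ 1 - t / a := by
    have : t / a ≤ 1 := (div_le_one ha0).mpr hta
    linarith
  have hl1 : 0 ≤ t / a := div_nonneg ht0 ha0.le
  have := hcc.2 hmem1 hmem2 hl0 hl1 (by ring)
  have hpt : (1 - t / a) • (1:ℝ) + (t / a) • (1 - a) = 1 - t := by
    simp only [smul_eq_mul]; field_simp; ring
  rw [hpt] at this
  simp only [Real.negMulLog, smul_eq_mul] at this
  have h1 : Real.log 1 = 0 := Real.log_one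
  calc (t / a) * (-((1 - a) * Real.log (1 - a)))
      = (1 - t / a) * (-1 * Real.log 1) + (t / a) * (-(1 - a) * Real.log (1 - a)) := by
        rw [h1]; ring
    _ ≤ -(1 - t) * Real.log (1 - t) := this
    _ = -((1 - t) * Real.log (1 - t)) := by ring

/-- Strict tangent-line bound for `φ` at `a`, valid on `[0, 1-a]` for `a < 1/2`. -/
lemma phiF_tangent {a t : ℝ} (ha0 : 0 < a) (ha : a < 1/2) (ht0 : 0 ≤ t) (ht1 : t ≤ 1 - a)
    (hne : t ≠ a) :
    phiF a - (Real.log a + Real.log (1-a) + 2) * a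
      < phiF t - (Real.log a + Real.log (1-a) + 2) * t := by
  set c : ℝ := Real.log a + Real.log (1-a) + 2 with hc
  set h : ℝ → ℝ := fun t => phiF t - c * t with hh
  have hcont : Continuous h := continuous_phiF.sub (continuous_const.mul continuous_id)
  have hderiv : ∀ x : ℝ, 0 < x → x < 1 → HasDerivAt h
      (Real.log (x * (1 - x)) - Real.log (a * (1 - a))) x := by
    intro x hx0 hx1
    have h1x : (0:ℝ) < 1 - x := by linarith
    have := (hasDerivAt_phiF hx0.ne' hx1.ne).sub ((hasDerivAt_id x).const_mul c)
    refine this.congr_deriv ?_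
    rw [Real.log_mul hx0.ne' h1x.ne', Real.log_mul ha0.ne' (by linarith : (1:ℝ)-a ≠ 0)]
    ring
  have hprod : ∀ x : ℝ, x * (1 - x) - a * (1 - a) = (x - a) * (1 - a - x) := by
    intro x; ring
  have haa : (0:ℝ) < a * (1 - a) := mul_pos ha0 (by linarith)
  have hanti : StrictAntiOn h (Set.Icc 0 a) := by
    apply strictAntiOn_of_deriv_neg (convex_Icc _ _) hcont.continuousOn
    intro x hx
    rw [interior_Icc] at hx
    have hx0 : 0 < x := hx.1
    have hx1 : x < 1 := by linarith [hx.2]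
    rw [(hderiv x hx0 hx1).deriv]
    have hlt : x * (1 - x) < a * (1 - a) := by nlinarith [hx.2]
    have := Real.log_lt_log (mul_pos hx0 (by linarith)) hlt
    linarith
  have hmono : StrictMonoOn h (Set.Icc a (1 - a)) := by
    apply strictMonoOn_of_deriv_pos (convex_Icc _ _) hcont.continuousOn
    intro x hx
    rw [interior_Icc] at hx
    have hx0 : 0 < x := lt_trans ha0 hx.1
    have hx1 : x < 1 := by linarith [hx.2]
    rw [(hderiv x hx0 hx1).deriv]
    have hlt : a * (1 - a) < x * (1 - x) := by nlinarith [hx.1, hx.2]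
    have := Real.log_lt_log haa hlt
    linarith
  rcases lt_or_gt_of_ne hne with hlt | hgt
  · exact hanti (Set.mem_Icc.mpr ⟨ht0, hlt.le⟩) (Set.mem_Icc.mpr ⟨ha0.le, le_refl a⟩) hlt
  · exact hmono (Set.mem_Icc.mpr ⟨le_refl a, by linarith⟩) (Set.mem_Icc.mpr ⟨hgt.le, ht1⟩) hgt

lemma K_le_one {N : ℝ} (hN : 3 ≤ N) : (N-1)*(Real.log N - Real.log (N-1)) ≤ 1 := by
  have h1 : (0:ℝ) < N - 1 := by linarith
  have h2 : (0:ℝ) < N / (N-1) := by positivity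
  have hlog := Real.log_le_sub_one_of_pos h2
  rw [Real.log_div (by linarith : N ≠ 0) (by linarith : N - 1 ≠ 0)] at hlog
  have h3 : N/(N-1) - 1 = 1/(N-1) := by field_simp; ring
  rw [h3] at hlog
  calc (N-1)*(Real.log N - Real.log (N-1)) ≤ (N-1)*(1/(N-1)) :=
        mul_le_mul_of_nonneg_left hlog h1.le
    _ = 1 := by field_simp

lemma psi2_strictAnti {N C : ℝ} (hN : 3 ≤ N) (hC : C ≤ 1 - Real.log 2) :
    StrictAntiOn (fun t : ℝ => (1 - t) * Real.log (1 - t) + t * C) (Set.Icc 0 (1/N)) := by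
  have hcont : Continuous fun t : ℝ => (1 - t) * Real.log (1 - t) + t * C :=
    (Real.continuous_mul_log.comp (continuous_const.sub continuous_id)).add
      (continuous_id.mul continuous_const)
  apply strictAntiOn_of_deriv_neg (convex_Icc _ _) hcont.continuousOn
  intro t ht
  rw [interior_Icc] at ht
  have hN0 : (0:ℝ) < N := by linarith
  have hinvN : 1/N ≤ 1/3 := by
    rw [div_le_div_iff₀ hN0 (by norm_num)]; linarith
  have ht3 : t < 1/3 := lt_of_lt_of_le ht.2 hinvN
  have hd : HasDerivAt (fun t : ℝ => (1-t)*Real.log (1-t) + t*C)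
      (-(Real.log (1-t)+1) + 1 * C) t :=
    (hasDerivAt_one_sub_mul_log (by linarith : t ≠ 1)).add ((hasDerivAt_id t).mul_const C)
  rw [hd.deriv]
  have h23 : (2:ℝ)/3 ≤ 1 - t := by linarith
  have hlog : Real.log (2/3) ≤ Real.log (1 - t) := Real.log_le_log (by norm_num) h23
  have hinv : Real.log ((2:ℝ)/3) = - Real.log (3/2) := by
    rw [show (2:ℝ)/3 = ((3:ℝ)/2)⁻¹ by norm_num, Real.log_inv]
  have h32 : Real.log ((3:ℝ)/2) < 1/2 := by
    have := Real.log_lt_sub_one_of_pos (by norm_num : (0:ℝ) < 3/2) (by norm_num)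
    linarith
  have h2 : (0.6931471803:ℝ) < Real.log 2 := Real.log_two_gt_d9
  linarith

lemma log_five_ge : (5:ℝ)/4 ≤ Real.log 5 := by
  have he : Real.exp 1 < 2.7182818286 := Real.exp_one_lt_d9
  have h5pow : Real.exp 1 ^ 5 < 625 := by
    calc Real.exp 1 ^ 5 < 2.7182818286 ^ 5 := by
          gcongr
      _ < 625 := by norm_num
  have hexp5 : Real.exp (5:ℝ) < 625 := by
    rw [show (5:ℝ) = ((5:ℕ):ℝ) * 1 by norm_num, Real.exp_nat_mul]
    exact h5pow
  have h54 : Real.exp ((5:ℝ)/4) ≤ 5 := by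
    by_contra hcon
    push_neg at hcon
    have hpow : (5:ℝ)^4 ≤ Real.exp (5/4) ^ 4 := by
      apply pow_le_pow_left₀ (by norm_num) hcon.le
    rw [← Real.exp_nat_mul] at hpow
    norm_num at hpow
    linarith
  rw [Real.le_log_iff_exp_le (by norm_num : (0:ℝ) < 5)]
  exact h54

lemma endpoint_ineq (n : ℕ) (hn : 3 ≤ n) :
    (n:ℝ)*((n:ℝ)-1)*(Real.log n - Real.log ((n:ℝ)-1)) + Real.log ((n:ℝ)-1)
      ≤ (n:ℝ) * Real.log n := by
  rcases eq_or_ne n 3 with h3 | h3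
  · subst h3
    have h := Real.log_le_log (by norm_num : (0:ℝ) < 27) (by norm_num : (27:ℝ) ≤ 32)
    rw [show (27:ℝ) = 3^3 by norm_num, show (32:ℝ) = 2^5 by norm_num,
      Real.log_pow, Real.log_pow] at h
    push_cast at h ⊢
    norm_num
    linarith
  rcases eq_or_ne n 4 with h4 | h4
  · subst h4
    have h := Real.log_le_log (by norm_num : (0:ℝ) < 65536) (by norm_num : (65536:ℝ) ≤ 177147)
    rw [show (65536:ℝ) = 4^8 by norm_num, show (177147:ℝ) = 3^11 by norm_num,
      Real.log_pow, Real.log_pow] at h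
    push_cast at h ⊢
    norm_num
    linarith
  · have h5 : 5 ≤ n := by omega
    have hN5 : (5:ℝ) ≤ (n:ℝ) := by exact_mod_cast h5
    set N := (n:ℝ) with hNdef
    set L1 := Real.log N with hL1def
    set L2 := Real.log (N-1) with hL2def
    have hK : (N-1)*(L1-L2) ≤ 1 := K_le_one (by linarith)
    have hL2L1 : L2 ≤ L1 := Real.log_le_log (by linarith) (by linarith)
    have hL1b : (5:ℝ)/4 ≤ L1 := le_trans log_five_ge (Real.log_le_log (by norm_num) hN5)
    have h1 : N*((N-1)*(L1-L2)) ≤ N*1 := mul_le_mul_of_nonneg_left hK (by linarith)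
    have h2 : (N-1)*(5/4) ≤ (N-1)*L1 := mul_le_mul_of_nonneg_left hL1b (by linarith)
    nlinarith

/-- Entropy `H(p) = -∑ pᵢ log pᵢ` (with `0 log 0 = 0`). -/
noncomputable def entropy {n : ℕ} (p : Fin n → ℝ) : ℝ :=
  -∑ i, p i * Real.log (p i)

/-- Extropy `H(1-x)`. -/
noncomputable def extropy {n : ℕ} (x : Fin n → ℝ) : ℝ :=
  -∑ i, (1 - x i) * Real.log (1 - x i)

/-- For `n ≥ 3`, the uniform vector `1/n` is the unique minimizer of
`x ↦ H(1−x) − H(x)` over the standard simplex. -/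
theorem uniform_unique_minimizer_extropy_sub_entropy (n : ℕ) (hn : 3 ≤ n) :
    ∀ x : Fin n → ℝ, (∀ i, 0 ≤ x i) → (∑ i, x i = 1) →
      x ≠ (fun _ => (1 : ℝ) / n) →
      extropy (fun _ : Fin n => (1 : ℝ) / n) - entropy (fun _ : Fin n => (1 : ℝ) / n)
        < extropy x - entropy x := by
  intro x hx0 hsum hxne
  have hn3 : (3:ℝ) ≤ (n:ℝ) := by exact_mod_cast hn
  set N := (n:ℝ) with hNdef
  have hN0 : (0:ℝ) < N := by linarith
  have hgoalx : extropy x - entropy x = ∑ i, phiF (x i) := by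
    simp only [extropy, entropy, phiF]
    rw [Finset.sum_sub_distrib]
    ring
  have hgoalu : extropy (fun _ : Fin n => (1:ℝ)/n) - entropy (fun _ : Fin n => (1:ℝ)/n)
      = N * phiF (1/N) := by
    simp only [extropy, entropy, phiF, Finset.sum_const, Finset.card_univ, Fintype.card_fin,
      nsmul_eq_mul, hNdef]
    ring
  rw [hgoalx, hgoalu]
  have ha0 : (0:ℝ) < 1/N := by positivity
  by_cases hcase : ∀ i, x i ≤ 1 - 1/N
  · -- Case 1 : tangent-line argument
    set c : ℝ := Real.log (1/N) + Real.log (1 - 1/N) + 2 with hcdef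
    have ha : (1:ℝ)/N < 1/2 := by
      rw [div_lt_div_iff₀ hN0 (by norm_num)]; linarith
    obtain ⟨j, hj⟩ : ∃ j, x j ≠ 1/N := by
      by_contra hall
      push_neg at hall
      exact hxne (funext fun i => by rw [hall i])
    have hsumlt : ∑ _i : Fin n, (phiF (1/N) - c * (1/N)) < ∑ i, (phiF (x i) - c * x i) := by
      apply Finset.sum_lt_sum
      · intro i _
        rcases eq_or_ne (x i) (1/N) with he | hne
        · rw [he]
        · exact (phiF_tangent ha0 ha (hx0 i) (hcase i) hne).le
      · exact ⟨j, Finset.mem_univ j, phiF_tangent ha0 ha (hx0 j) (hcase j) hj⟩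
    have hL : ∑ _i : Fin n, (phiF ((1:ℝ)/N) - c * (1/N)) = N * phiF (1/N) - c := by
      rw [Finset.sum_const, Finset.card_univ, Fintype.card_fin, nsmul_eq_mul, ← hNdef]
      field_simp
    have hR : ∑ i, (phiF (x i) - c * x i) = (∑ i, phiF (x i)) - c := by
      rw [Finset.sum_sub_distrib, ← Finset.mul_sum, hsum, mul_one]
    rw [hL, hR] at hsumlt
    linarith
  · -- Case 2 : one large coordinate
    push_neg at hcase
    obtain ⟨j, hj⟩ := hcase
    set u : ℝ := ∑ i ∈ Finset.univ.erase j, x i with hudef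
    have hxj : x j + u = 1 := by
      rw [hudef, Finset.add_sum_erase _ _ (Finset.mem_univ j)]
      exact hsum
    have hu0 : 0 ≤ u := Finset.sum_nonneg fun i _ => hx0 i
    have huN : u < 1/N := by linarith
    have hxi_le : ∀ i ∈ Finset.univ.erase j, x i ≤ u := by
      intro i hi
      exact Finset.single_le_sum (fun k _ => hx0 k) hi
    set L1 : ℝ := Real.log N with hL1def
    set L2 : ℝ := Real.log (N-1) with hL2def
    set K : ℝ := (N-1)*(L1 - L2) with hKdef
    have hN1 : (0:ℝ) < N - 1 := by linarith
    have hlog1N : Real.log (1 - 1/N) = L2 - L1 := by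
      rw [show (1:ℝ) - 1/N = (N-1)/N by field_simp, hL1def, hL2def,
        Real.log_div hN1.ne' hN0.ne']
    have hKalt : N * (-((1 - 1/N) * Real.log (1 - 1/N))) = K := by
      rw [hlog1N, hKdef]
      field_simp
      ring
    have hxju : x j = 1 - u := by linarith
    have hphixj : phiF (x j) = (1-u)*Real.log (1-u) - u*Real.log u := by
      rw [hxju, phiF, show (1:ℝ) - (1-u) = u by ring]
    -- Step A : lower bound the sum by ψ u
    have hstepA : (1-u)*Real.log (1-u) + u*(K-L2) ≤ ∑ i, phiF (x i) := by
      have hsplit : ∑ i, phiF (x i) = phiF (x j) + ∑ i ∈ Finset.univ.erase j, phiF (x i) :=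
        (Finset.add_sum_erase _ (fun i => phiF (x i)) (Finset.mem_univ j)).symm
      rcases eq_or_lt_of_le hu0 with hu | hu
      · -- u = 0
        have hzero : ∀ i ∈ Finset.univ.erase j, x i = 0 :=
          (Finset.sum_eq_zero_iff_of_nonneg (fun k _ => hx0 k)).mp hu.symm
        have h1 : ∑ i ∈ Finset.univ.erase j, phiF (x i) = 0 := by
          apply Finset.sum_eq_zero
          intro i hi
          rw [hzero i hi]
          simp [phiF]
        rw [hsplit, h1, hphixj, ← hu]
        simp
      · -- u > 0
        set b : ℝ := u / (N-1) with hbdef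
        have hb : 0 < b := div_pos hu hN1
        have hterm : ∀ i ∈ Finset.univ.erase j,
            x i * (Real.log b + 1 + K) - b ≤ phiF (x i) := by
          intro i hi
          have ht0 : 0 ≤ x i := hx0 i
          have htu : x i ≤ 1/N := le_of_lt (lt_of_le_of_lt (hxi_le i hi) huN)
          have h1 : x i * Real.log b + x i - b ≤ x i * Real.log (x i) :=
            mul_log_tangent ht0 hb
          have h2 : (x i / (1/N)) * (-((1 - 1/N) * Real.log (1 - 1/N)))
              ≤ -((1 - x i) * Real.log (1 - x i)) :=
            chord_bound ha0 (by rw [div_le_one hN0]; linarith) ht0 htu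
          have hxdiv : x i / (1/N) = x i * N := by field_simp
          rw [hxdiv, mul_assoc, hKalt] at h2
          calc x i * (Real.log b + 1 + K) - b
              = (x i * Real.log b + x i - b) + x i * K := by ring
            _ ≤ x i * Real.log (x i) + (-((1 - x i) * Real.log (1 - x i))) := add_le_add h1 h2
            _ = phiF (x i) := by rw [phiF]; ring
        have hcard : (Finset.univ.erase j).card = n - 1 := by
          rw [Finset.card_erase_of_mem (Finset.mem_univ j), Finset.card_univ, Fintype.card_fin]
        have hcast : ((n - 1 : ℕ):ℝ) = N - 1 := by
          have h1n : (1:ℕ) ≤ n := by omega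
          push_cast [Nat.cast_sub h1n]
          rw [hNdef]
        have hsum_erase : ∑ i ∈ Finset.univ.erase j, (x i * (Real.log b + 1 + K) - b)
            = u * (Real.log b + 1 + K) - (N-1)*b := by
          rw [Finset.sum_sub_distrib, ← Finset.sum_mul, ← hudef, Finset.sum_const, hcard,
            nsmul_eq_mul, hcast]
        have hge : u * (Real.log b + 1 + K) - (N-1)*b
            ≤ ∑ i ∈ Finset.univ.erase j, phiF (x i) := by
          rw [← hsum_erase]
          exact Finset.sum_le_sum hterm
        have hNb : (N-1)*b = u := by
          rw [hbdef]; field_simp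
        have hlogb : Real.log b = Real.log u - L2 := by
          rw [hbdef, Real.log_div hu.ne' hN1.ne', hL2def]
        rw [hsplit, hphixj]
        rw [hlogb, hNb] at hge
        nlinarith [hge]
    -- Step B : strict monotonicity
    have hK1 : K ≤ 1 := by rw [hKdef, hL1def, hL2def]; exact K_le_one hn3
    have hL2ge : Real.log 2 ≤ L2 := by
      rw [hL2def]; exact Real.log_le_log (by norm_num) (by linarith)
    have hanti := psi2_strictAnti (N := N) (C := K - L2) hn3 (by linarith)
    have hlt := hanti (Set.mem_Icc.mpr ⟨hu0, huN.le⟩) (Set.mem_Icc.mpr ⟨ha0.le, le_refl _⟩) huN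
    simp only at hlt
    -- Step C : endpoint value
    have hEP := endpoint_ineq n hn
    rw [← hNdef, ← hL1def, ← hL2def] at hEP
    have hphi1N : N * phiF (1/N) = K - L1 := by
      rw [phiF, show Real.log ((1:ℝ)/N) = -L1 by rw [one_div, Real.log_inv, hL1def],
        hlog1N, hKdef]
      field_simp
      ring
    have hpsi1N : (1-1/N)*Real.log (1-1/N) + (1/N)*(K-L2) = -L2/N := by
      rw [hlog1N, hKdef]
      field_simp
      ring
    have hfin : K - L1 ≤ -L2/N := by
      rw [le_div_iff₀ hN0, hKdef]
      linarith [hEP]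
    rw [hphi1N]
    rw [hpsi1N] at hlt
    linarith
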